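/- The map π assigning to each stabilizer α the functional πα on the algebra 𝒜 of periodic functions, (πα)(u) = the eventual value of the sequence k ↦ u(α_k), is a surjective ring homomorphism from the ring 𝒮 of stabilizers (with pointwise addition and multiplication of sequences) onto the ring 𝒢 of characters of 𝒜 (with plus-convolution ⊕ as addition and dot-convolution ⊙ as multiplication), and its kernel is exactly the set 𝒞₀ of 0-sequences. In particular, πα is a character for every stabilizer α, and the induced quotient map 𝒮/𝒞₀ → 𝒢 is a ring isomorphism of the polyadic ring 𝒫 onto 𝒢 which, for every positive integer p, carries the ideal 𝒢^(p) = p·𝒫 onto the cluster V_p = {φ ∈ 𝒢 : φ(u) = u(0) for all u ∈ 𝒜_p}; hence this map is an isomorphism of topological rings from (𝒫, σ) onto (𝒢, γ), where σ is the topology on 𝒫 with the ideals 𝒢^(n) as a base of zero neighborhoods and γ is the Gelfand topology on 𝒢 (the topology of pointwise convergence on 𝒜). -/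

import Mathlib

open Function

noncomputable section

/-- The subalgebra of `ℤ → ℂ` consisting of all periodic functions. -/
def PerFun : Subalgebra ℂ (ℤ → ℂ) where
  carrier := {u | ∃ p : ℤ, 0 < p ∧ Function.Periodic u p}
  add_mem' := by
    rintro u v ⟨p, hp, hu⟩ ⟨q, hq, hv⟩
    refine ⟨p * q, mul_pos hp hq, ?_⟩
    have hu' : Function.Periodic u (p * q) := by simpa [mul_comm] using hu.int_mul q
    have hv' : Function.Periodic v (p * q) := hv.int_mul p
    exact hu'.add hv'
  mul_mem' := by
    rintro u v ⟨p, hp, hu⟩ ⟨q, hq, hv⟩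
    refine ⟨p * q, mul_pos hp hq, ?_⟩
    have hu' : Function.Periodic u (p * q) := by simpa [mul_comm] using hu.int_mul q
    have hv' : Function.Periodic v (p * q) := hv.int_mul p
    exact hu'.mul hv'
  one_mem' := ⟨1, one_pos, fun _ => rfl⟩
  zero_mem' := ⟨1, one_pos, fun _ => rfl⟩
  algebraMap_mem' := fun c => ⟨1, one_pos, fun _ => rfl⟩

/-- `u` belongs to the subalgebra `𝒜_p` of `p`-periodic functions. -/
def InAp (p : ℤ) (u : ↥PerFun) : Prop := Function.Periodic (u : ℤ → ℂ) p

/-- A character of the algebra `𝒜` of periodic functions: a nonzero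
`ℂ`-linear multiplicative functional. -/
def IsChar (ψ : ↥PerFun → ℂ) : Prop :=
  (∀ u v, ψ (u + v) = ψ u + ψ v) ∧
  (∀ (c : ℂ) (u), ψ (c • u) = c * ψ u) ∧
  (∀ u v, ψ (u * v) = ψ u * ψ v) ∧
  ψ ≠ 0

lemma shiftAdd_mem (u : ↥PerFun) (x : ℤ) :
    (fun y => (u : ℤ → ℂ) (x + y)) ∈ PerFun := by
  obtain ⟨p, hp, hu⟩ := u.2
  refine ⟨p, hp, fun y => ?_⟩
  show (u : ℤ → ℂ) (x + (y + p)) = (u : ℤ → ℂ) (x + y)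
  rw [← add_assoc]
  exact hu (x + y)

/-- For `u ∈ 𝒜`, the function `y ↦ u (x + y)`, as an element of `𝒜`. -/
def shiftAdd (u : ↥PerFun) (x : ℤ) : ↥PerFun :=
  ⟨fun y => (u : ℤ → ℂ) (x + y), shiftAdd_mem u x⟩

lemma shiftMul_mem (u : ↥PerFun) (x : ℤ) :
    (fun y => (u : ℤ → ℂ) (x * y)) ∈ PerFun := by
  obtain ⟨p, hp, hu⟩ := u.2
  refine ⟨p, hp, fun y => ?_⟩
  show (u : ℤ → ℂ) (x * (y + p)) = (u : ℤ → ℂ) (x * y)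
  rw [mul_add]
  exact (hu.int_mul x) (x * y)

/-- For `u ∈ 𝒜`, the function `y ↦ u (x * y)`, as an element of `𝒜`. -/
def shiftMul (u : ↥PerFun) (x : ℤ) : ↥PerFun :=
  ⟨fun y => (u : ℤ → ℂ) (x * y), shiftMul_mem u x⟩

lemma negArg_mem (u : ↥PerFun) :
    (fun y => (u : ℤ → ℂ) (-y)) ∈ PerFun := by
  obtain ⟨p, hp, hu⟩ := u.2
  refine ⟨p, hp, fun y => ?_⟩
  show (u : ℤ → ℂ) (-(y + p)) = (u : ℤ → ℂ) (-y)
  rw [neg_add, ← sub_eq_add_neg]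
  exact hu.sub_eq (-y)

/-- For `u ∈ 𝒜`, the function `x ↦ u (-x)`, as an element of `𝒜`. -/
def negArg (u : ↥PerFun) : ↥PerFun :=
  ⟨fun y => (u : ℤ → ℂ) (-y), negArg_mem u⟩

lemma plusInner_mem (ψ : ↥PerFun → ℂ) (u : ↥PerFun) :
    (fun x => ψ (shiftAdd u x)) ∈ PerFun := by
  obtain ⟨p, hp, hu⟩ := u.2
  refine ⟨p, hp, fun x => ?_⟩
  show ψ (shiftAdd u (x + p)) = ψ (shiftAdd u x)
  congr 1
  apply Subtype.ext
  funext y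
  show (u : ℤ → ℂ) (x + p + y) = (u : ℤ → ℂ) (x + y)
  rw [show x + p + y = x + y + p by ring]
  exact hu (x + y)

lemma dotInner_mem (ψ : ↥PerFun → ℂ) (u : ↥PerFun) :
    (fun x => ψ (shiftMul u x)) ∈ PerFun := by
  obtain ⟨p, hp, hu⟩ := u.2
  refine ⟨p, hp, fun x => ?_⟩
  show ψ (shiftMul u (x + p)) = ψ (shiftMul u x)
  congr 1
  apply Subtype.ext
  funext y
  show (u : ℤ → ℂ) ((x + p) * y) = (u : ℤ → ℂ) (x * y)
  rw [show (x + p) * y = x * y + y * p by ring]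
  exact (hu.int_mul y) (x * y)

/-- The plus-convolution `(φ ⊕ ψ)(u) = φ (x ↦ ψ (y ↦ u (x + y)))`. -/
def plusConv (φ ψ : ↥PerFun → ℂ) : ↥PerFun → ℂ :=
  fun u => φ ⟨fun x => ψ (shiftAdd u x), plusInner_mem ψ u⟩

/-- The dot-convolution `(φ ⊙ ψ)(u) = φ (x ↦ ψ (y ↦ u (x * y)))`. -/
def dotConv (φ ψ : ↥PerFun → ℂ) : ↥PerFun → ℂ :=
  fun u => φ ⟨fun x => ψ (shiftMul u x), dotInner_mem ψ u⟩

/-- The reflection `(⊖ φ)(u) = φ (x ↦ u (-x))`. -/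
def reflect (φ : ↥PerFun → ℂ) : ↥PerFun → ℂ :=
  fun u => φ (negArg u)

/-- The functional `θ : u ↦ u 0`. -/
def theta : ↥PerFun → ℂ := fun u => (u : ℤ → ℂ) 0

/-- The functional `ε : u ↦ u 1`. -/
def eps : ↥PerFun → ℂ := fun u => (u : ℤ → ℂ) 1


open Filter

/-- A sequence `α : ℕ → ℤ` is a stabilizer: for every `u ∈ 𝒜` the sequence
`k ↦ u (α k)` is eventually constant. -/
def IsStab (α : ℕ → ℤ) : Prop :=
  ∀ u : ↥PerFun, ∃ v : ℂ, ∀ᶠ k in Filter.cofinite, (u : ℤ → ℂ) (α k) = v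

/-- `α` is a `0`-sequence: every positive integer divides `α k` for all but
finitely many `k`. -/
def IsZeroSeq (α : ℕ → ℤ) : Prop :=
  ∀ n : ℤ, 0 < n → ∀ᶠ k in Filter.cofinite, n ∣ α k

/-- The functional `π α` associated to a sequence `α`: the value `(π α) u` is
the eventual (limiting) value of the sequence `k ↦ u (α k)`. -/
noncomputable def piChar (α : ℕ → ℤ) : ↥PerFun → ℂ :=
  fun u => limUnder Filter.cofinite (fun k => (u : ℤ → ℂ) (α k))

/-- The type of stabilizers. -/
def StabT := {α : ℕ → ℤ // IsStab α}

/-- Two stabilizers are equivalent iff their difference is a `0`-sequence. -/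
instance stabSetoid : Setoid StabT where
  r a b := IsZeroSeq (fun k => a.1 k - b.1 k)
  iseqv := by
    refine ⟨fun a n hn => ?_, fun {a b} h n hn => ?_, fun {a b c} h1 h2 n hn => ?_⟩
    · exact Filter.Eventually.of_forall fun k => by simp
    · filter_upwards [h n hn] with k hk
      have he : b.1 k - a.1 k = -(a.1 k - b.1 k) := by ring
      rw [he]; exact hk.neg_right
    · filter_upwards [h1 n hn, h2 n hn] with k hk1 hk2
      have he : a.1 k - c.1 k = (a.1 k - b.1 k) + (b.1 k - c.1 k) := by ring
      rw [he]; exact dvd_add hk1 hk2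

/-- The polyadic ring `𝒫 = 𝒮 ⁄ 𝒞₀`: classes of stabilizers modulo `0`-sequences. -/
def P19 := Quotient stabSetoid

/-- The zero stabilizer (the constant sequence `0`). -/
def zeroStab : StabT :=
  ⟨fun _ => 0, fun u => ⟨(u : ℤ → ℂ) 0, Filter.Eventually.of_forall fun _ => rfl⟩⟩

/-- The grid `𝒢(p;x) = x + 𝒢⁽ᵖ⁾ ⊆ 𝒫`, described via representatives:
`y ∈ 𝒢(p;x)` iff `y` is represented by `a + p·γ` for some representative `a`
of `x` and some stabilizer `γ`. -/
def gridP (p : ℤ) (x : P19) : Set P19 :=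
  {y | ∃ a b : StabT, ⟦a⟧ = x ∧ ⟦b⟧ = y ∧
    ∃ γ : StabT, IsZeroSeq (fun k => b.1 k - (a.1 k + p * γ.1 k))}

/-- The topology `σ` on `𝒫`: the ring topology with the ideals `𝒢⁽ⁿ⁾` as a base
of neighborhoods of zero, i.e., the topology generated by all grids. -/
def sigmaT : TopologicalSpace P19 :=
  TopologicalSpace.generateFrom {S | ∃ p : ℤ, 0 < p ∧ ∃ x : P19, S = gridP p x}

/-- The set of characters `𝒢`, as a type. -/
def Gchar := {ψ : ↥PerFun → ℂ // IsChar ψ}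

/-- The Gelfand topology `γ` on `𝒢`: the topology of pointwise convergence
on `𝒜`, generated by the subbasic sets `U_R(u;ψ)`. -/
def gelfandT : TopologicalSpace Gchar :=
  TopologicalSpace.generateFrom
    {S | ∃ (u : ↥PerFun) (ψ : Gchar) (R : ℝ), 0 < R ∧
      S = {φ : Gchar | ‖φ.1 u - ψ.1 u‖ < R}}

/-! ### Auxiliary infrastructure -/

open Filter

set_option synthInstance.maxHeartbeats 1000000
set_option maxHeartbeats 1000000

section Aux

/-- Evaluation of a `p`-periodic function only depends on the argument mod `p`. -/
lemma per_eval {u : ℤ → ℂ} {p : ℤ} (hu : Function.Periodic u p) {m n : ℤ}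
    (h : p ∣ m - n) : u m = u n := by
  obtain ⟨c, hc⟩ := h
  have hm : m = n + c * p := by rw [mul_comm] at hc; omega
  rw [hm]
  exact (hu.int_mul c) n

lemma InAp.of_dvd {p q : ℤ} (h : p ∣ q) {u : ↥PerFun} (hu : InAp p u) : InAp q u := by
  intro x
  exact per_eval hu (by simpa using h)

/-- The indicator of the arithmetic progression `j + pℤ`. -/
def ind (p j : ℤ) : ℤ → ℂ := fun n => if p ∣ n - j then 1 else 0

lemma ind_periodic (p j : ℤ) : Function.Periodic (ind p j) p := by
  intro n
  unfold ind
  have h : n + p - j = (n - j) + p := by ring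
  rw [h]
  simp [dvd_add_self_right]

lemma ind_mem (p j : ℤ) (hp : 0 < p) : ind p j ∈ PerFun := ⟨p, hp, ind_periodic p j⟩

/-- The indicator as an element of `𝒜`. -/
def indP (p j : ℤ) (hp : 0 < p) : ↥PerFun := ⟨ind p j, ind_mem p j hp⟩

lemma indP_inAp (p j : ℤ) (hp : 0 < p) : InAp p (indP p j hp) := ind_periodic p j

lemma ind_eq_one {p j n : ℤ} (h : p ∣ n - j) : ind p j n = 1 := if_pos h

lemma ind_eq_zero {p j n : ℤ} (h : ¬ p ∣ n - j) : ind p j n = 0 := if_neg h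

lemma dvd_of_ind_eq_one {p j n : ℤ} (h : ind p j n ≠ 0) : p ∣ n - j := by
  by_contra hc
  exact h (ind_eq_zero hc)

/-- Decomposition of a `p`-periodic function as a combination of indicators. -/
lemma sum_ind {p : ℤ} (hp : 0 < p) (u : ↥PerFun) (hu : InAp p u) :
    u = ∑ j ∈ Finset.range p.toNat, ((u : ℤ → ℂ) (j : ℤ)) • indP p (j : ℤ) hp := by
  apply Subtype.ext
  funext n
  have hcoe : ((∑ j ∈ Finset.range p.toNat,
      ((u : ℤ → ℂ) (j : ℤ)) • indP p (j : ℤ) hp : ↥PerFun) : ℤ → ℂ) n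
      = ∑ j ∈ Finset.range p.toNat, ((u : ℤ → ℂ) (j : ℤ)) * ind p (j : ℤ) n := by
    rw [AddSubmonoidClass.coe_finset_sum]
    simp [indP]
  rw [hcoe]
  set j₀ : ℕ := (n % p).toNat with hj₀
  have hj₀z : (j₀ : ℤ) = n % p := Int.toNat_of_nonneg (Int.emod_nonneg n hp.ne')
  have hj₀mem : j₀ ∈ Finset.range p.toNat := by
    rw [Finset.mem_range]
    have := Int.emod_lt_of_pos n hp
    omega
  have hdvd0 : p ∣ n - (j₀ : ℤ) := by
    rw [hj₀z, Int.emod_def]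
    exact ⟨n / p, by ring⟩
  rw [Finset.sum_eq_single_of_mem j₀ hj₀mem ?_]
  · rw [ind_eq_one hdvd0, mul_one]
    exact per_eval hu hdvd0
  · intro b hb hbne
    have hnd : ¬ p ∣ n - (b : ℤ) := by
      intro hd
      have h2 : p ∣ (j₀ : ℤ) - (b : ℤ) := by
        have : (j₀ : ℤ) - (b : ℤ) = (n - (b:ℤ)) - (n - (j₀:ℤ)) := by ring
        rw [this]
        exact dvd_sub hd hdvd0
      have hb' : (b : ℤ) < p := by
        rw [Finset.mem_range] at hb
        omega
      have hj' : (j₀ : ℤ) < p := by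
        rw [Finset.mem_range] at hj₀mem
        omega
      have : (j₀ : ℤ) - (b : ℤ) = 0 :=
        Int.eq_zero_of_abs_lt_dvd h2 (by rw [abs_lt]; omega)
      exact hbne (by omega)
    rw [ind_eq_zero hnd, mul_zero]


lemma IsChar.map_zero {ψ : ↥PerFun → ℂ} (h : IsChar ψ) : ψ 0 = 0 := by
  have h0 := h.1 0 0
  simp only [add_zero] at h0
  exact left_eq_add.mp h0

lemma IsChar.map_one {ψ : ↥PerFun → ℂ} (h : IsChar ψ) : ψ 1 = 1 := by
  have h1 := h.2.2.1 1 1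
  rw [mul_one] at h1
  by_cases hz : ψ 1 = 0
  · exfalso
    apply h.2.2.2
    funext u
    have := h.2.2.1 u 1
    rw [mul_one, hz, mul_zero] at this
    simpa using this
  · have : ψ 1 * 1 = ψ 1 * ψ 1 := by rw [mul_one]; exact h1
    exact (mul_left_cancel₀ hz this).symm

lemma IsChar.map_sum {ψ : ↥PerFun → ℂ} (h : IsChar ψ) {ι : Type*} [DecidableEq ι]
    (s : Finset ι) (f : ι → ↥PerFun) : ψ (∑ i ∈ s, f i) = ∑ i ∈ s, ψ (f i) := by
  induction s using Finset.induction_on with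
  | empty => simpa using h.map_zero
  | insert _ _ hx ih =>
    rw [Finset.sum_insert hx, Finset.sum_insert hx, h.1, ih]

/-- Each character is evaluation at a (generalized) integer: on `p`-periodic
functions it is evaluation at a fixed residue `r` mod `p`. -/
lemma char_res {ψ : ↥PerFun → ℂ} (h : IsChar ψ) {p : ℤ} (hp : 0 < p) :
    ∃ r : ℤ, ∀ u : ↥PerFun, InAp p u → ψ u = (u : ℤ → ℂ) r := by
  classical
  set S : ℕ → ℂ := fun j => ψ (indP p (j : ℤ) hp) with hS
  have hone : InAp p (1 : ↥PerFun) := fun x => rfl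
  have hsum1 : ∑ j ∈ Finset.range p.toNat, S j = 1 := by
    have hdec := sum_ind hp 1 hone
    have := congrArg ψ hdec
    rw [h.map_sum] at this
    rw [← h.map_one]
    rw [this]
    apply Finset.sum_congr rfl
    intro j _
    have : ((1 : ↥PerFun) : ℤ → ℂ) (j : ℤ) = 1 := rfl
    rw [this, one_smul]
  have hex : ∃ j₀ ∈ Finset.range p.toNat, S j₀ ≠ 0 := by
    by_contra hc
    push_neg at hc
    rw [Finset.sum_eq_zero hc] at hsum1
    exact zero_ne_one hsum1
  obtain ⟨j₀, hj₀mem, hj₀⟩ := hex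
  -- orthogonality and idempotence
  have hidem : S j₀ = 1 := by
    have hmul : indP p (j₀ : ℤ) hp * indP p (j₀ : ℤ) hp = indP p (j₀ : ℤ) hp := by
      apply Subtype.ext
      funext n
      show ind p (j₀ : ℤ) n * ind p (j₀ : ℤ) n = ind p (j₀ : ℤ) n
      unfold ind
      by_cases hd : p ∣ n - (j₀ : ℤ) <;> simp [hd]
    have := h.2.2.1 (indP p (j₀ : ℤ) hp) (indP p (j₀ : ℤ) hp)
    rw [hmul] at this
    have h2 : S j₀ * 1 = S j₀ * S j₀ := by rw [mul_one]; exact this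
    exact (mul_left_cancel₀ hj₀ h2).symm
  have horth : ∀ j ∈ Finset.range p.toNat, j ≠ j₀ → S j = 0 := by
    intro j hj hne
    have hmul : indP p (j : ℤ) hp * indP p (j₀ : ℤ) hp = 0 := by
      apply Subtype.ext
      funext n
      show ind p (j : ℤ) n * ind p (j₀ : ℤ) n = 0
      by_cases hd : p ∣ n - (j : ℤ)
      · have hnd : ¬ p ∣ n - (j₀ : ℤ) := by
          intro hd0
          have hdd : p ∣ (j : ℤ) - (j₀ : ℤ) := by
            have he : (j : ℤ) - (j₀ : ℤ) = (n - (j₀:ℤ)) - (n - (j:ℤ)) := by ring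
            rw [he]; exact dvd_sub hd0 hd
          rw [Finset.mem_range] at hj hj₀mem
          have h1 : (j : ℤ) < p := by omega
          have h2 : (j₀ : ℤ) < p := by omega
          have := Int.eq_zero_of_abs_lt_dvd hdd (by rw [abs_lt]; omega)
          exact hne (by omega)
        rw [ind_eq_zero hnd, mul_zero]
      · rw [ind_eq_zero hd, zero_mul]
    have := h.2.2.1 (indP p (j : ℤ) hp) (indP p (j₀ : ℤ) hp)
    rw [hmul, h.map_zero] at this
    rcases mul_eq_zero.mp this.symm with h' | h'
    · exact h'
    · exact absurd h' hj₀
  refine ⟨(j₀ : ℤ), fun u hu => ?_⟩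
  have hdec := sum_ind hp u hu
  conv_lhs => rw [hdec]
  rw [h.map_sum]
  have : ∀ j ∈ Finset.range p.toNat,
      ψ (((u : ℤ → ℂ) (j : ℤ)) • indP p (j : ℤ) hp) = ((u : ℤ → ℂ) (j : ℤ)) * S j := by
    intro j _
    exact h.2.1 _ _
  rw [Finset.sum_congr rfl this]
  rw [Finset.sum_eq_single_of_mem j₀ hj₀mem (fun b hb hbne => by rw [horth b hb hbne, mul_zero])]
  rw [hidem, mul_one]

/-- The eventual value of an eventually-constant sequence is computed by `limUnder`. -/
lemma ev_const {α : ℕ → ℤ} {u : ↥PerFun} {c : ℂ}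
    (h : ∀ᶠ k in Filter.cofinite, (u : ℤ → ℂ) (α k) = c) : piChar α u = c := by
  apply Filter.Tendsto.limUnder_eq
  exact Filter.Tendsto.congr'
    (by filter_upwards [h] with k hk using hk.symm) tendsto_const_nhds

lemma piChar_eq_ev {α : ℕ → ℤ} (hα : IsStab α) (u : ↥PerFun) :
    ∀ᶠ k in Filter.cofinite, (u : ℤ → ℂ) (α k) = piChar α u := by
  obtain ⟨c, hc⟩ := hα u
  rw [ev_const hc]
  exact hc

/-- A stabilizer has an eventually constant residue mod every positive `p`. -/
lemma stab_res {α : ℕ → ℤ} (hα : IsStab α) {p : ℤ} (hp : 0 < p) :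
    ∃ r : ℤ, ∀ᶠ k in Filter.cofinite, p ∣ α k - r := by
  classical
  have hall : ∀ᶠ k in Filter.cofinite, ∀ j ∈ Finset.range p.toNat,
      ind p (j : ℤ) (α k) = piChar α (indP p (j : ℤ) hp) := by
    rw [Filter.eventually_all_finset]
    intro j _
    exact piChar_eq_ev hα (indP p (j : ℤ) hp)
  obtain ⟨k₀, hk₀⟩ := hall.exists
  set j₀ : ℕ := (α k₀ % p).toNat with hj₀
  have hj₀z : (j₀ : ℤ) = α k₀ % p := Int.toNat_of_nonneg (Int.emod_nonneg _ hp.ne')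
  have hj₀mem : j₀ ∈ Finset.range p.toNat := by
    rw [Finset.mem_range]
    have := Int.emod_lt_of_pos (α k₀) hp
    omega
  have hdvd : p ∣ α k₀ - (j₀ : ℤ) := by
    rw [hj₀z, Int.emod_def]
    exact ⟨α k₀ / p, by ring⟩
  have h1 : piChar α (indP p (j₀ : ℤ) hp) = 1 := by
    rw [← hk₀ j₀ hj₀mem]
    exact ind_eq_one hdvd
  refine ⟨(j₀ : ℤ), ?_⟩
  filter_upwards [piChar_eq_ev hα (indP p (j₀ : ℤ) hp)] with k hk
  apply dvd_of_ind_eq_one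
  show ind p (j₀ : ℤ) (α k) ≠ 0
  rw [show ind p (j₀:ℤ) (α k) = piChar α (indP p (j₀ : ℤ) hp) from hk, h1]
  exact one_ne_zero

lemma isStab_of_res {α : ℕ → ℤ}
    (h : ∀ p : ℤ, 0 < p → ∃ r : ℤ, ∀ᶠ k in Filter.cofinite, p ∣ α k - r) :
    IsStab α := by
  intro u
  obtain ⟨p, hp, hu⟩ := u.2
  obtain ⟨r, hr⟩ := h p hp
  refine ⟨(u : ℤ → ℂ) r, ?_⟩
  filter_upwards [hr] with k hk
  exact per_eval hu hk

lemma piChar_eval {α : ℕ → ℤ} {p : ℤ} {r : ℤ}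
    (hr : ∀ᶠ k in Filter.cofinite, p ∣ α k - r) {u : ↥PerFun} (hu : InAp p u) :
    piChar α u = (u : ℤ → ℂ) r := by
  apply ev_const
  filter_upwards [hr] with k hk
  exact per_eval hu hk

/-- `π α` is a character for every stabilizer `α`. -/
lemma isChar_piChar {α : ℕ → ℤ} (hα : IsStab α) : IsChar (piChar α) := by
  refine ⟨?_, ?_, ?_, ?_⟩
  · intro u v
    obtain ⟨cu, hcu⟩ := hα u
    obtain ⟨cv, hcv⟩ := hα v
    rw [ev_const hcu, ev_const hcv]
    apply ev_const
    filter_upwards [hcu, hcv] with k hku hkv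
    show ((u : ℤ → ℂ) + (v : ℤ → ℂ)) (α k) = cu + cv
    simp [hku, hkv]
  · intro c u
    obtain ⟨cu, hcu⟩ := hα u
    rw [ev_const hcu]
    apply ev_const
    filter_upwards [hcu] with k hku
    show (c • (u : ℤ → ℂ)) (α k) = c * cu
    simp [hku]
  · intro u v
    obtain ⟨cu, hcu⟩ := hα u
    obtain ⟨cv, hcv⟩ := hα v
    rw [ev_const hcu, ev_const hcv]
    apply ev_const
    filter_upwards [hcu, hcv] with k hku hkv
    show ((u : ℤ → ℂ) * (v : ℤ → ℂ)) (α k) = cu * cv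
    simp [hku, hkv]
  · intro hzero
    have h1 : piChar α (1 : ↥PerFun) = 1 :=
      ev_const (Filter.Eventually.of_forall fun k => rfl)
    rw [hzero] at h1
    exact one_ne_zero h1.symm

/-- Stabilizers are closed under pointwise addition. -/
lemma isStab_add {α β : ℕ → ℤ} (hα : IsStab α) (hβ : IsStab β) :
    IsStab (fun k => α k + β k) := by
  apply isStab_of_res
  intro p hp
  obtain ⟨ra, hra⟩ := stab_res hα hp
  obtain ⟨rb, hrb⟩ := stab_res hβ hp
  refine ⟨ra + rb, ?_⟩
  filter_upwards [hra, hrb] with k hka hkb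
  have he : α k + β k - (ra + rb) = (α k - ra) + (β k - rb) := by ring
  rw [he]; exact dvd_add hka hkb

lemma isStab_mul {α β : ℕ → ℤ} (hα : IsStab α) (hβ : IsStab β) :
    IsStab (fun k => α k * β k) := by
  apply isStab_of_res
  intro p hp
  obtain ⟨ra, hra⟩ := stab_res hα hp
  obtain ⟨rb, hrb⟩ := stab_res hβ hp
  refine ⟨ra * rb, ?_⟩
  filter_upwards [hra, hrb] with k hka hkb
  have he : α k * β k - ra * rb = α k * (β k - rb) + rb * (α k - ra) := by ring
  rw [he]; exact dvd_add (hkb.mul_left _) (hka.mul_left _)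

lemma isStab_sub {α β : ℕ → ℤ} (hα : IsStab α) (hβ : IsStab β) :
    IsStab (fun k => α k - β k) := by
  apply isStab_of_res
  intro p hp
  obtain ⟨ra, hra⟩ := stab_res hα hp
  obtain ⟨rb, hrb⟩ := stab_res hβ hp
  refine ⟨ra - rb, ?_⟩
  filter_upwards [hra, hrb] with k hka hkb
  have he : α k - β k - (ra - rb) = (α k - ra) - (β k - rb) := by ring
  rw [he]; exact dvd_sub hka hkb

lemma isStab_congr {α β : ℕ → ℤ} (h : ∀ᶠ k in Filter.cofinite, α k = β k)
    (hβ : IsStab β) : IsStab α := by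
  intro u
  obtain ⟨c, hc⟩ := hβ u
  refine ⟨c, ?_⟩
  filter_upwards [h, hc] with k hk hkc
  rw [hk]; exact hkc

lemma piChar_congr_ev {α β : ℕ → ℤ} (h : ∀ᶠ k in Filter.cofinite, α k = β k)
    (hβ : IsStab β) : piChar α = piChar β := by
  funext u
  obtain ⟨c, hc⟩ := hβ u
  rw [ev_const hc]
  apply ev_const
  filter_upwards [h, hc] with k hk hkc
  rw [hk]; exact hkc

/-- `InAp` for shifted functions. -/
lemma inAp_shiftAdd {p : ℤ} {u : ↥PerFun} (hu : InAp p u) (x : ℤ) :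
    InAp p (shiftAdd u x) := by
  intro y
  show (u : ℤ → ℂ) (x + (y + p)) = (u : ℤ → ℂ) (x + y)
  exact per_eval hu (by ring_nf; exact ⟨1, by ring⟩)

lemma inAp_shiftMul {p : ℤ} {u : ↥PerFun} (hu : InAp p u) (x : ℤ) :
    InAp p (shiftMul u x) := by
  intro y
  show (u : ℤ → ℂ) (x * (y + p)) = (u : ℤ → ℂ) (x * y)
  exact per_eval hu ⟨x, by ring⟩

/-- `π` transforms pointwise addition into plus-convolution. -/
lemma piChar_add {α β : ℕ → ℤ} (hα : IsStab α) (hβ : IsStab β) :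
    piChar (fun k => α k + β k) = plusConv (piChar α) (piChar β) := by
  funext u
  obtain ⟨p, hp, hu⟩ := u.2
  have hu' : InAp p u := hu
  obtain ⟨ra, hra⟩ := stab_res hα hp
  obtain ⟨rb, hrb⟩ := stab_res hβ hp
  have hL : piChar (fun k => α k + β k) u = (u : ℤ → ℂ) (ra + rb) := by
    apply piChar_eval (p := p) ?_ hu'
    filter_upwards [hra, hrb] with k hka hkb
    have he : α k + β k - (ra + rb) = (α k - ra) + (β k - rb) := by ring
    rw [he]; exact dvd_add hka hkb
  rw [hL]
  show _ = piChar α ⟨fun x => piChar β (shiftAdd u x), plusInner_mem _ u⟩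
  have hg : ∀ x, piChar β (shiftAdd u x) = (u : ℤ → ℂ) (x + rb) := fun x =>
    piChar_eval hrb (inAp_shiftAdd hu' x)
  have hInner : InAp p (⟨fun x => piChar β (shiftAdd u x), plusInner_mem _ u⟩ : ↥PerFun) := by
    intro x
    show piChar β (shiftAdd u (x + p)) = piChar β (shiftAdd u x)
    rw [hg, hg]
    exact per_eval hu' ⟨1, by ring⟩
  rw [piChar_eval hra hInner]
  show _ = piChar β (shiftAdd u ra)
  rw [hg]

/-- `π` transforms pointwise multiplication into dot-convolution. -/
lemma piChar_mul {α β : ℕ → ℤ} (hα : IsStab α) (hβ : IsStab β) :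
    piChar (fun k => α k * β k) = dotConv (piChar α) (piChar β) := by
  funext u
  obtain ⟨p, hp, hu⟩ := u.2
  have hu' : InAp p u := hu
  obtain ⟨ra, hra⟩ := stab_res hα hp
  obtain ⟨rb, hrb⟩ := stab_res hβ hp
  have hL : piChar (fun k => α k * β k) u = (u : ℤ → ℂ) (ra * rb) := by
    apply piChar_eval (p := p) ?_ hu'
    filter_upwards [hra, hrb] with k hka hkb
    have he : α k * β k - ra * rb = α k * (β k - rb) + rb * (α k - ra) := by ring
    rw [he]; exact dvd_add (hkb.mul_left _) (hka.mul_left _)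
  rw [hL]
  show _ = piChar α ⟨fun x => piChar β (shiftMul u x), dotInner_mem _ u⟩
  have hg : ∀ x, piChar β (shiftMul u x) = (u : ℤ → ℂ) (x * rb) := fun x =>
    piChar_eval hrb (inAp_shiftMul hu' x)
  have hInner : InAp p (⟨fun x => piChar β (shiftMul u x), dotInner_mem _ u⟩ : ↥PerFun) := by
    intro x
    show piChar β (shiftMul u (x + p)) = piChar β (shiftMul u x)
    rw [hg, hg]
    exact per_eval hu' ⟨rb, by ring⟩
  rw [piChar_eval hra hInner]
  show _ = piChar β (shiftMul u ra)
  rw [hg]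

/-- Surjectivity of `π` onto the characters. -/
lemma piChar_surj {ψ : ↥PerFun → ℂ} (hψ : IsChar ψ) :
    ∃ α : ℕ → ℤ, IsStab α ∧ piChar α = ψ := by
  have hfac : ∀ k : ℕ, (0 : ℤ) < ((k + 1).factorial : ℤ) := by
    intro k
    exact_mod_cast (k + 1).factorial_pos
  choose r hr using fun k : ℕ => char_res hψ (hfac k)
  have key : ∀ u : ↥PerFun, ∀ᶠ k in Filter.cofinite, (u : ℤ → ℂ) (r k) = ψ u := by
    intro u
    obtain ⟨q, hq, hu⟩ := u.2
    rw [Nat.cofinite_eq_atTop, Filter.eventually_atTop]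
    refine ⟨q.toNat, fun k hk => ?_⟩
    have hdq : q ∣ ((k + 1).factorial : ℤ) := by
      have h1 : q.toNat ∣ (k + 1).factorial :=
        Nat.dvd_factorial (by omega) (by omega)
      have h2 : (q.toNat : ℤ) = q := Int.toNat_of_nonneg hq.le
      exact_mod_cast h2 ▸ Int.natCast_dvd_natCast.mpr h1
    exact (hr k u (InAp.of_dvd hdq hu)).symm
  exact ⟨r, fun u => ⟨ψ u, key u⟩, funext fun u => ev_const (key u)⟩

/-- Kernel: `π α = θ` iff `α` is a `0`-sequence. -/
lemma piChar_ker {α : ℕ → ℤ} (hα : IsStab α) : piChar α = theta ↔ IsZeroSeq α := by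
  constructor
  · intro h n hn
    have h1 : piChar α (indP n 0 hn) = 1 := by
      rw [h]
      show ind n 0 0 = 1
      exact ind_eq_one (by simp)
    filter_upwards [piChar_eq_ev hα (indP n 0 hn)] with k hk
    have : ind n 0 (α k) ≠ 0 := by
      rw [show ind n 0 (α k) = piChar α (indP n 0 hn) from hk, h1]
      exact one_ne_zero
    simpa using dvd_of_ind_eq_one this
  · intro h
    funext u
    obtain ⟨p, hp, hu⟩ := u.2
    apply ev_const
    filter_upwards [h p hp] with k hk
    exact per_eval hu (by simpa using hk)

/-- `π` descends to classes of stabilizers. -/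
def charOf (a : StabT) : Gchar := ⟨piChar a.1, isChar_piChar a.2⟩

lemma piChar_congr_setoid {a b : StabT} (h : a ≈ b) : piChar a.1 = piChar b.1 := by
  funext u
  obtain ⟨p, hp, hu⟩ := u.2
  obtain ⟨r, hr⟩ := stab_res b.2 hp
  have hr' : ∀ᶠ k in Filter.cofinite, p ∣ a.1 k - r := by
    filter_upwards [h p hp, hr] with k h1 h2
    have he : a.1 k - r = (a.1 k - b.1 k) + (b.1 k - r) := by ring
    rw [he]; exact dvd_add h1 h2
  rw [piChar_eval hr' hu, piChar_eval hr hu]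

/-- The induced map `𝒫 → 𝒢`. -/
def Emap : P19 → Gchar :=
  Quotient.lift charOf fun _ _ h => Subtype.ext (piChar_congr_setoid h)

lemma Emap_mk (a : StabT) : Emap ⟦a⟧ = charOf a := rfl

lemma Emap_inj : Function.Injective Emap := by
  intro x y h
  obtain ⟨a, rfl⟩ := Quotient.exists_rep x
  obtain ⟨b, rfl⟩ := Quotient.exists_rep y
  have hpi : piChar a.1 = piChar b.1 := congrArg Subtype.val h
  apply Quotient.sound
  intro n hn
  obtain ⟨ra, hra⟩ := stab_res a.2 hn
  obtain ⟨rb, hrb⟩ := stab_res b.2 hn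
  have h1 : piChar a.1 (indP n ra hn) = 1 := by
    rw [piChar_eval hra (indP_inAp n ra hn)]
    exact ind_eq_one (by simp)
  have h2 : piChar b.1 (indP n ra hn) = ind n ra rb :=
    piChar_eval hrb (indP_inAp n ra hn)
  have h3 : n ∣ rb - ra := by
    apply dvd_of_ind_eq_one
    rw [show ind n ra rb = piChar b.1 (indP n ra hn) from h2.symm, ← hpi, h1]
    exact one_ne_zero
  filter_upwards [hra, hrb] with k hka hkb
  have he : a.1 k - b.1 k = (a.1 k - ra) - (b.1 k - rb) - (rb - ra) := by ring
  rw [he]; exact dvd_sub (dvd_sub hka hkb) h3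

lemma Emap_surj : Function.Surjective Emap := by
  intro φ
  obtain ⟨α, hα, hpi⟩ := piChar_surj φ.2
  exact ⟨⟦⟨α, hα⟩⟧, Subtype.ext hpi⟩

/-- The isomorphism `𝒫 ≃ 𝒢`. -/
def eIso : P19 ≃ Gchar := Equiv.ofBijective Emap ⟨Emap_inj, Emap_surj⟩

lemma grid_self (p : ℤ) (x : P19) : x ∈ gridP p x := by
  obtain ⟨a, ha⟩ := Quotient.exists_rep x
  refine ⟨a, a, ha, ha, zeroStab, fun n hn => Filter.Eventually.of_forall fun k => ?_⟩
  show n ∣ a.1 k - (a.1 k + p * (0 : ℤ))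
  simp

lemma grid_agree {p : ℤ} (hp : 0 < p) {x y : P19} (hy : y ∈ gridP p x) :
    ∀ u, InAp p u → (Emap y).1 u = (Emap x).1 u := by
  obtain ⟨a, b, hax, hby, γ, hγ⟩ := hy
  intro u hu
  obtain ⟨ra, hra⟩ := stab_res a.2 hp
  have hrb : ∀ᶠ k in Filter.cofinite, p ∣ b.1 k - ra := by
    filter_upwards [hγ p hp, hra] with k h1 h2
    have he : b.1 k - ra = (b.1 k - (a.1 k + p * γ.1 k)) + (a.1 k - ra) + p * γ.1 k := by
      ring
    rw [he]; exact dvd_add (dvd_add h1 h2) ⟨γ.1 k, rfl⟩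
  rw [← hax, ← hby, Emap_mk, Emap_mk]
  show piChar b.1 u = piChar a.1 u
  rw [piChar_eval hrb hu, piChar_eval hra hu]

/-- The image of a grid under `π` is the set of characters agreeing with the
center on all `p`-periodic functions. -/
lemma grid_image {p : ℤ} (hp : 0 < p) (x : P19) :
    Emap '' gridP p x = {φ : Gchar | ∀ u, InAp p u → φ.1 u = (Emap x).1 u} := by
  ext φ
  constructor
  · rintro ⟨y, hy, rfl⟩
    exact grid_agree hp hy
  · intro hφ
    obtain ⟨β, hβ, hpiβ⟩ := piChar_surj φ.2
    obtain ⟨a, ha⟩ := Quotient.exists_rep x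
    obtain ⟨ra, hra⟩ := stab_res a.2 hp
    obtain ⟨rb, hrb⟩ := stab_res hβ hp
    have h1 : (Emap x).1 (indP p ra hp) = 1 := by
      rw [← ha, Emap_mk]
      show piChar a.1 _ = 1
      rw [piChar_eval hra (indP_inAp p ra hp)]
      exact ind_eq_one (by simp)
    have h2 : φ.1 (indP p ra hp) = ind p ra rb := by
      rw [← hpiβ]; exact piChar_eval hrb (indP_inAp p ra hp)
    have h3 : p ∣ rb - ra := by
      apply dvd_of_ind_eq_one
      rw [show ind p ra rb = φ.1 (indP p ra hp) from h2.symm,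
        hφ _ (indP_inAp p ra hp), h1]
      exact one_ne_zero
    have hev : ∀ᶠ k in Filter.cofinite, p ∣ β k - a.1 k := by
      filter_upwards [hra, hrb] with k hka hkb
      have he : β k - a.1 k = (β k - rb) + (rb - ra) - (a.1 k - ra) := by ring
      rw [he]; exact dvd_sub (dvd_add hkb h3) hka
    classical
    set δ : ℕ → ℤ := fun k => if p ∣ β k - a.1 k then β k - a.1 k else 0 with hδ
    have hpδ : ∀ k, p ∣ δ k := by
      intro k
      by_cases h : p ∣ β k - a.1 k <;> simp [hδ, h]
    have hδev : ∀ᶠ k in Filter.cofinite, δ k = β k - a.1 k := by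
      filter_upwards [hev] with k hk; simp [hδ, hk]
    have hδstab : IsStab δ := isStab_congr hδev (isStab_sub hβ a.2)
    set b : ℕ → ℤ := fun k => a.1 k + δ k with hb
    have hbβ : ∀ᶠ k in Filter.cofinite, b k = β k := by
      filter_upwards [hδev] with k hk
      show a.1 k + δ k = β k
      rw [hk]; ring
    have hbstab : IsStab b := isStab_congr hbβ hβ
    set γ : ℕ → ℤ := fun k => δ k / p with hγdef
    have hδγ : ∀ k, δ k = p * γ k := fun k => (Int.mul_ediv_cancel' (hpδ k)).symm
    have hγstab : IsStab γ := by
      apply isStab_of_res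
      intro n hn
      obtain ⟨s, hs⟩ := stab_res hδstab (mul_pos hp hn)
      obtain ⟨k₀, hk₀⟩ := hs.exists
      have hps : p ∣ s := by
        have he : s = δ k₀ - (δ k₀ - s) := by ring
        rw [he]
        exact dvd_sub (hpδ k₀) (dvd_trans (dvd_mul_right p n) hk₀)
      obtain ⟨t, hts⟩ := hps
      refine ⟨t, ?_⟩
      filter_upwards [hs] with k hk
      have he : p * (γ k - t) = δ k - s := by rw [hts, hδγ k]; ring
      exact (mul_dvd_mul_iff_left hp.ne').mp (he ▸ hk)
    refine ⟨⟦⟨b, hbstab⟩⟧, ⟨a, ⟨b, hbstab⟩, ha, rfl, ⟨γ, hγstab⟩,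
      fun n hn => Filter.Eventually.of_forall fun k => ?_⟩, ?_⟩
    · show n ∣ b k - (a.1 k + p * γ k)
      have he : b k - (a.1 k + p * γ k) = 0 := by
        show a.1 k + δ k - (a.1 k + p * γ k) = 0
        rw [hδγ k]; ring
      rw [he]
      exact dvd_zero n
    · show charOf ⟨b, hbstab⟩ = φ
      apply Subtype.ext
      show piChar b = φ.1
      rw [← hpiβ]
      exact piChar_congr_ev hbβ hβ

/-- The agreement set is a single subbasic ball of the Gelfand topology. -/
lemma agree_eq_ball {p : ℤ} (hp : 0 < p) (a : StabT) {ra : ℤ}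
    (hra : ∀ᶠ k in Filter.cofinite, p ∣ a.1 k - ra) :
    {φ : Gchar | ∀ u, InAp p u → φ.1 u = (Emap ⟦a⟧).1 u}
      = {φ : Gchar |
          ‖φ.1 (indP p ra hp) - (Emap ⟦a⟧).1 (indP p ra hp)‖ < 1} := by
  have hx1 : (Emap ⟦a⟧).1 (indP p ra hp) = 1 := by
    rw [Emap_mk]
    show piChar a.1 _ = 1
    rw [piChar_eval hra (indP_inAp p ra hp)]
    exact ind_eq_one (by simp)
  have hxu : ∀ u, InAp p u → (Emap ⟦a⟧).1 u = (u : ℤ → ℂ) ra := by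
    intro u hu
    rw [Emap_mk]
    exact piChar_eval hra hu
  ext φ
  constructor
  · intro h
    show ‖_‖ < 1
    rw [h _ (indP_inAp p ra hp)]
    simpa using one_pos
  · intro h
    obtain ⟨rφ, hrφ⟩ := char_res φ.2 hp
    have h2 : φ.1 (indP p ra hp) = ind p ra rφ := hrφ _ (indP_inAp p ra hp)
    have h3 : p ∣ rφ - ra := by
      by_contra hc
      rw [Set.mem_setOf_eq, h2, ind_eq_zero hc, hx1] at h
      simp at h
    intro u hu
    rw [hrφ u hu, hxu u hu]
    exact per_eval hu h3

lemma cont_fwd : @Continuous P19 Gchar sigmaT gelfandT Emap := by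
  letI : TopologicalSpace P19 := sigmaT
  letI : TopologicalSpace Gchar := gelfandT
  apply continuous_generateFrom_iff.mpr
  rintro s ⟨u, ψ, R, hR, rfl⟩
  rw [isOpen_iff_forall_mem_open]
  intro x hx
  obtain ⟨p, hp, hu⟩ := u.2
  refine ⟨gridP p x, fun y hy => ?_, ?_, grid_self p x⟩
  · simp only [Set.mem_preimage, Set.mem_setOf_eq] at hx ⊢
    rw [grid_agree hp hy u hu]
    exact hx
  · exact TopologicalSpace.isOpen_generateFrom_of_mem ⟨p, hp, x, rfl⟩

lemma cont_bwd : @Continuous Gchar P19 gelfandT sigmaT eIso.symm := by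
  letI : TopologicalSpace P19 := sigmaT
  letI : TopologicalSpace Gchar := gelfandT
  apply continuous_generateFrom_iff.mpr
  rintro s ⟨p, hp, x, rfl⟩
  show IsOpen (eIso.symm ⁻¹' gridP p x)
  rw [← Equiv.image_eq_preimage_symm]
  have hco : ⇑eIso = Emap := rfl
  obtain ⟨a, ha⟩ := Quotient.exists_rep x
  obtain ⟨ra, hra⟩ := stab_res a.2 hp
  rw [hco, grid_image hp x, ← ha, agree_eq_ball hp a hra]
  exact TopologicalSpace.isOpen_generateFrom_of_mem
    ⟨indP p ra hp, Emap ⟦a⟧, 1, one_pos, rfl⟩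

end Aux


/-- Prüfer's ideal numbers as Gelfand's maximal ideals:  `π` maps each
stabilizer `α` to the character `π α` (the eventual value functional); `π` is a
surjective ring homomorphism from the ring `𝒮` of stabilizers (with pointwise
operations) onto the ring `𝒢` of characters (with convolution operations),
with kernel exactly the set `𝒞₀` of `0`-sequences; the induced quotient map is
a bijection of `𝒫 = 𝒮 ⁄ 𝒞₀` onto `𝒢` carrying, for every positive `p`, the
ideal `𝒢⁽ᵖ⁾` onto the cluster `V_p`, and it is a homeomorphism from `(𝒫, σ)`
onto `(𝒢, γ)`. -/
theorem prufer_polyadic_iso_gelfand_characters :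
    (∀ α : ℕ → ℤ, IsStab α →
      IsChar (piChar α) ∧
        ∀ u : ↥PerFun, ∀ᶠ k in Filter.cofinite, (u : ℤ → ℂ) (α k) = piChar α u) ∧
    (∀ α β : ℕ → ℤ, IsStab α → IsStab β →
      IsStab (fun k => α k + β k) ∧ IsStab (fun k => α k * β k) ∧
      piChar (fun k => α k + β k) = plusConv (piChar α) (piChar β) ∧
      piChar (fun k => α k * β k) = dotConv (piChar α) (piChar β)) ∧
    (∀ ψ : ↥PerFun → ℂ, IsChar ψ → ∃ α : ℕ → ℤ, IsStab α ∧ piChar α = ψ) ∧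
    (∀ α : ℕ → ℤ, IsStab α → (piChar α = theta ↔ IsZeroSeq α)) ∧
    (∃ e : P19 ≃ Gchar,
      (∀ a : StabT, (e ⟦a⟧).1 = piChar a.1) ∧
      (∀ p : ℤ, 0 < p →
        (fun x : P19 => (e x).1) '' gridP p ⟦zeroStab⟧
          = {φ : ↥PerFun → ℂ | IsChar φ ∧ ∀ u, InAp p u → φ u = (u : ℤ → ℂ) 0}) ∧
      @Continuous P19 Gchar sigmaT gelfandT e ∧
      @Continuous Gchar P19 gelfandT sigmaT e.symm) := by
  refine ⟨?_, ?_, ?_, ?_, ?_⟩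
  · intro α hα
    exact ⟨isChar_piChar hα, piChar_eq_ev hα⟩
  · intro α β hα hβ
    exact ⟨isStab_add hα hβ, isStab_mul hα hβ, piChar_add hα hβ, piChar_mul hα hβ⟩
  · intro ψ hψ
    exact piChar_surj hψ
  · intro α hα
    exact piChar_ker hα
  · refine ⟨eIso, fun a => rfl, ?_, cont_fwd, cont_bwd⟩
    intro p hp
    have hz : ∀ u : ↥PerFun, (Emap ⟦zeroStab⟧).1 u = (u : ℤ → ℂ) 0 := fun u =>
      ev_const (Filter.Eventually.of_forall fun _ => rfl)
    have h1 := grid_image hp (⟦zeroStab⟧ : P19)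
    ext f
    simp only [Set.mem_image, Set.mem_setOf_eq]
    constructor
    · rintro ⟨x, hx, rfl⟩
      refine ⟨(eIso x).2, fun u hu => ?_⟩
      have hmem : Emap x ∈ Emap '' gridP p ⟦zeroStab⟧ := ⟨x, hx, rfl⟩
      rw [h1] at hmem
      show (Emap x).1 u = (u : ℤ → ℂ) 0
      rw [hmem u hu, hz u]
    · rintro ⟨hchar, hval⟩
      have hmem : (⟨f, hchar⟩ : Gchar) ∈
          {φ : Gchar | ∀ u, InAp p u → φ.1 u = (Emap ⟦zeroStab⟧).1 u} := by
        intro u hu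
        show f u = (Emap ⟦zeroStab⟧).1 u
        rw [hz u]
        exact hval u hu
      rw [← h1] at hmem
      obtain ⟨x, hx, hEx⟩ := hmem
      exact ⟨x, hx, congrArg Subtype.val hEx⟩

end
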